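/- Sokhotsky–Weierstrass representation: for a bounded continuous probability density Φ on R and any point x where Φ is continuous, Φ(x) = -(1/π) lim_{ε→0+} Im E[1/(x - X + iε)], where X has density Φ. -/

import Mathlib

open MeasureTheory Set

/-- The Poisson-kernel integral after substitution `y = x + ε u`. -/
private lemma sw_subst (Φ : ℝ → ℝ) (x : ℝ) {ε : ℝ} (hε : 0 < ε) :
    (∫ y : ℝ, Φ y * (ε / ((x - y) ^ 2 + ε ^ 2))) =
      ∫ u : ℝ, Φ (x + ε * u) / (1 + u ^ 2) := by
  have h1 : (∫ y : ℝ, Φ y * (ε / ((x - y) ^ 2 + ε ^ 2))) =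
      ∫ s : ℝ, Φ (x + s) * (ε / (s ^ 2 + ε ^ 2)) := by
    rw [← integral_add_left_eq_self (fun y : ℝ => Φ y * (ε / ((x - y) ^ 2 + ε ^ 2))) x]
    congr 1
    ext s
    ring_nf
  have h2 := MeasureTheory.Measure.integral_comp_mul_left (fun s : ℝ => Φ (x + s) * (ε / (s ^ 2 + ε ^ 2))) ε
  rw [h1]
  have habs : |ε⁻¹| = ε⁻¹ := abs_of_pos (inv_pos.mpr hε)
  rw [habs, smul_eq_mul] at h2
  have h3 : ∀ u : ℝ, Φ (x + ε * u) * (ε / ((ε * u) ^ 2 + ε ^ 2)) =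
      ε⁻¹ * (Φ (x + ε * u) / (1 + u ^ 2)) := by
    intro u
    have : (ε * u) ^ 2 + ε ^ 2 = ε ^ 2 * (1 + u ^ 2) := by ring
    rw [this]
    field_simp
  rw [funext h3, MeasureTheory.integral_const_mul] at h2
  exact (mul_left_cancel₀ (inv_ne_zero hε.ne') h2).symm

/-- Sokhotsky–Weierstrass representation: for a bounded continuous probability
density `Φ` on `ℝ` and any point `x` (of continuity of `Φ`),
`Φ(x) = -(1/π) lim_{ε→0⁺} Im ∫ Φ(y)/(x - y + iε) dy`. -/
theorem sokhotsky_weierstrass_density (Φ : ℝ → ℝ)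
    (hpos : ∀ y, 0 ≤ Φ y) (hint : Integrable Φ) (hnorm : ∫ y, Φ y = 1)
    (hbdd : ∃ C : ℝ, ∀ y, Φ y ≤ C) (hcont : Continuous Φ) (x : ℝ) :
    Filter.Tendsto
      (fun ε : ℝ =>
        -(1 / Real.pi) * (∫ y : ℝ, (Φ y : ℂ) / ((x : ℂ) - y + ε * Complex.I)).im)
      (nhdsWithin 0 (Set.Ioi 0)) (nhds (Φ x)) := by
  obtain ⟨C, hC⟩ := hbdd
  have hC0 : 0 ≤ C := le_trans (hpos 0) (hC 0)
  -- Step 1: the target function equals (1/π) ∫ Φ(x+εu)/(1+u²) du for ε > 0.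
  have key : ∀ ε : ℝ, 0 < ε →
      -(1 / Real.pi) * (∫ y : ℝ, (Φ y : ℂ) / ((x : ℂ) - y + ε * Complex.I)).im =
        (1 / Real.pi) * ∫ u : ℝ, Φ (x + ε * u) / (1 + u ^ 2) := by
    intro ε hε
    set d : ℝ → ℂ := fun y => (x : ℂ) - y + ε * Complex.I with hd
    have hdre : ∀ y, (d y).re = x - y := by intro y; simp [hd]
    have hdim : ∀ y, (d y).im = ε := by intro y; simp [hd]
    have hnormsq : ∀ y, Complex.normSq (d y) = (x - y) ^ 2 + ε ^ 2 := by
      intro y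
      rw [Complex.normSq_apply, hdre, hdim]; ring
    have hd0 : ∀ y, d y ≠ 0 := by
      intro y h
      have := hdim y
      rw [h] at this
      simp at this
      exact hε.ne this
    -- integrability of the complex integrand
    have hintc : Integrable (fun y : ℝ => (Φ y : ℂ) / d y) := by
      have : (fun y : ℝ => (Φ y : ℂ) / d y) =
          fun y => (d y)⁻¹ * (Φ y : ℂ) := by
        ext y; rw [div_eq_mul_inv, mul_comm]
      rw [this]
      refine Integrable.bdd_mul (c := ε⁻¹) (hint.ofReal) ?_ (Filter.Eventually.of_forall ?_)
      · refine (Continuous.aestronglyMeasurable ?_)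
        exact (Continuous.inv₀ (by continuity) hd0)
      · intro y
        rw [norm_inv]
        have h1 : ε ≤ ‖d y‖ := by
          have := Complex.abs_im_le_norm (d y)
          rw [hdim] at this
          simpa [abs_of_pos hε] using this
        exact inv_anti₀ hε h1
    have him : (∫ y : ℝ, (Φ y : ℂ) / d y).im =
        ∫ y : ℝ, ((Φ y : ℂ) / d y).im := (integral_im hintc).symm
    have himpt : ∀ y : ℝ, ((Φ y : ℂ) / d y).im =
        -(Φ y * (ε / ((x - y) ^ 2 + ε ^ 2))) := by
      intro y
      rw [Complex.div_im, hdre, hdim, hnormsq]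
      simp [Complex.ofReal_re, Complex.ofReal_im]
      ring
    calc -(1 / Real.pi) * (∫ y : ℝ, (Φ y : ℂ) / d y).im
        = -(1 / Real.pi) * ∫ y : ℝ, ((Φ y : ℂ) / d y).im := by rw [him]
      _ = -(1 / Real.pi) * -∫ y : ℝ, Φ y * (ε / ((x - y) ^ 2 + ε ^ 2)) := by
          rw [funext himpt, integral_neg]
      _ = (1 / Real.pi) * ∫ y : ℝ, Φ y * (ε / ((x - y) ^ 2 + ε ^ 2)) := by ring
      _ = (1 / Real.pi) * ∫ u : ℝ, Φ (x + ε * u) / (1 + u ^ 2) := by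
          rw [sw_subst Φ x hε]
  -- Step 2: dominated convergence for ε → 0⁺ of (1/π) ∫ Φ(x+εu)/(1+u²) du.
  have hDCT : Filter.Tendsto
      (fun ε : ℝ => ∫ u : ℝ, Φ (x + ε * u) / (1 + u ^ 2))
      (nhdsWithin 0 (Set.Ioi 0)) (nhds (∫ u : ℝ, Φ x / (1 + u ^ 2))) := by
    refine tendsto_integral_filter_of_dominated_convergence
      (fun u => C * (1 + u ^ 2)⁻¹) ?_ ?_ ?_ ?_
    · filter_upwards with ε
      refine Continuous.aestronglyMeasurable (Continuous.div (by continuity) (by continuity)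
        (fun u => by positivity))
    · filter_upwards with ε
      filter_upwards with u
      have h1 : (0:ℝ) < 1 + u ^ 2 := by positivity
      rw [Real.norm_eq_abs, abs_of_nonneg (div_nonneg (hpos _) (by positivity))]
      rw [div_eq_mul_inv]
      exact mul_le_mul_of_nonneg_right (hC _) (by positivity)
    · exact integrable_inv_one_add_sq.const_mul C
    · filter_upwards with u
      have h1 : Filter.Tendsto (fun ε : ℝ => x + ε * u) (nhdsWithin 0 (Set.Ioi 0))
          (nhds x) := by
        have : Filter.Tendsto (fun ε : ℝ => x + ε * u) (nhds 0) (nhds (x + 0 * u)) := by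
          exact (Continuous.tendsto (by continuity) 0)
        simpa using this.mono_left nhdsWithin_le_nhds
      exact ((hcont.tendsto x).comp h1).div_const _
  have hval : (∫ u : ℝ, Φ x / (1 + u ^ 2)) = Φ x * Real.pi := by
    have : (fun u : ℝ => Φ x / (1 + u ^ 2)) = fun u : ℝ => Φ x * (1 + u ^ 2)⁻¹ := by
      ext u; rw [div_eq_mul_inv]
    rw [this, MeasureTheory.integral_const_mul, integral_univ_inv_one_add_sq]
  have hπ : Real.pi ≠ 0 := Real.pi_ne_zero
  have hfinal : Filter.Tendsto
      (fun ε : ℝ => (1 / Real.pi) * ∫ u : ℝ, Φ (x + ε * u) / (1 + u ^ 2))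
      (nhdsWithin 0 (Set.Ioi 0)) (nhds (Φ x)) := by
    have := hDCT.const_mul (1 / Real.pi)
    rw [hval] at this
    convert this using 2
    field_simp
  refine hfinal.congr' ?_
  filter_upwards [self_mem_nhdsWithin] with ε (hε : ε ∈ Set.Ioi 0)
  exact (key ε hε).symm
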